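/- Let g be a symmetric invertible 4×4 real matrix and T : Fin 4 → Fin 4 → Fin 4 → ℝ with T^α_{βγ} = −T^α_{γβ}. Then the following are equivalent: (i) for all λ, ρ, ν: Σ_μ g_{λμ} T^μ_{ρν} − Σ_μ g_{ρμ} T^μ_{λν} + (1/3) g_{λν} Σ_μ T^μ_{μρ} − (1/3) g_{ρν} Σ_μ T^μ_{μλ} = 0; (ii) for all α, β, γ: T^α_{βγ} − (1/3) δ^α_β Σ_μ T^μ_{μγ} + (1/3) δ^α_γ Σ_μ T^μ_{μβ} = 0. (The paper's claim that the first-generation dynamical constraints of the Einstein–Palatini model can be written equivalently as the torsion constraints (ζ_1)^α_{βγ} = 0.) -/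
import Mathlib


/-- The first-generation dynamical constraints of the Einstein–Palatini model
can be written equivalently as the torsion constraints `(ζ_1)^α_{βγ} = 0`. -/
theorem stmt14 (g : Matrix (Fin 4) (Fin 4) ℝ)
    (hsym : ∀ i j, g i j = g j i) (hinv : IsUnit g)
    (T : Fin 4 → Fin 4 → Fin 4 → ℝ)
    (hT : ∀ α β γ, T α β γ = -T α γ β) :
    (∀ l r ν,
      (∑ m, g l m * T m r ν) - (∑ m, g r m * T m l ν)
        + (1 / 3) * g l ν * (∑ m, T m m r)
        - (1 / 3) * g r ν * (∑ m, T m m l) = 0) ↔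
    (∀ a b c,
      T a b c - (1 / 3) * (if a = b then (1 : ℝ) else 0) * (∑ m, T m m c)
        + (1 / 3) * (if a = c then (1 : ℝ) else 0) * (∑ m, T m m b) = 0) := by
  set tr : Fin 4 → ℝ := fun c => ∑ m, T m m c with htr
  set S : Fin 4 → Fin 4 → Fin 4 → ℝ := fun a b c =>
    T a b c - (1/3) * (if a = b then (1:ℝ) else 0) * tr c
      + (1/3) * (if a = c then (1:ℝ) else 0) * tr b with hS
  have hSanti : ∀ a b c, S a b c = - S a c b := by
    intro a b c
    simp only [hS]
    rw [hT a b c]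
    ring
  have hA : ∀ l r v, (∑ m, g l m * S m r v)
      = (∑ m, g l m * T m r v) - (1/3) * g l r * tr v + (1/3) * g l v * tr r := by
    intro l r v
    have key : ∀ m, g l m * S m r v
        = g l m * T m r v - (1/3) * (if m = r then g l m else 0) * tr v
          + (1/3) * (if m = v then g l m else 0) * tr r := by
      intro m
      simp only [hS]
      split_ifs <;> ring
    simp only [key]
    rw [Finset.sum_add_distrib, Finset.sum_sub_distrib]
    simp [Finset.mul_sum, ← Finset.sum_mul, Finset.sum_ite_eq']
  constructor
  · intro h a b c
    set A : Fin 4 → Fin 4 → Fin 4 → ℝ := fun l r v => ∑ m, g l m * S m r v with hAdef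
    have hanti : ∀ l r v, A l r v = - A l v r := by
      intro l r v
      simp only [hAdef, ← Finset.sum_neg_distrib]
      apply Finset.sum_congr rfl
      intro m _
      rw [hSanti m r v]; ring
    have hsymA : ∀ l r v, A l r v = A r l v := by
      intro l r v
      have h0 := h l r v
      have e1 := hA l r v
      have e2 := hA r l v
      simp only [hAdef] at *
      rw [e1, e2, hsym l r]
      linarith
    have hzero : ∀ l r v, A l r v = 0 := by
      intro l r v
      have : A l r v = - A l r v := by
        calc A l r v = A r l v := hsymA l r v
          _ = - A r v l := hanti r l v
          _ = - A v r l := by rw [hsymA r v l]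
          _ = A v l r := by rw [hanti v r l]; ring
          _ = A l v r := hsymA v l r
          _ = - A l r v := by rw [hanti l r v]; ring
      linarith
    -- invert g
    have hdet : IsUnit g.det := (Matrix.isUnit_iff_isUnit_det g).mp hinv
    have hvec : g.mulVec (fun m => S m b c) = 0 := by
      funext l
      simpa [Matrix.mulVec, dotProduct] using hzero l b c
    have : (fun m => S m b c) = 0 := by
      have := congrArg (g⁻¹.mulVec ·) hvec
      simpa [Matrix.mulVec_mulVec, Matrix.nonsing_inv_mul g hdet] using this
    have := congrFun this a
    simpa [hS, htr] using this
  · intro h l r v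
    have hSz : ∀ a b c, S a b c = 0 := by
      intro a b c; simpa [hS, htr] using h a b c
    have e1 := hA l r v
    have e2 := hA r l v
    have z1 : (∑ m, g l m * S m r v) = 0 := by
      simp [hSz]
    have z2 : (∑ m, g r m * S m l v) = 0 := by
      simp [hSz]
    rw [z1] at e1
    rw [z2] at e2
    rw [hsym l r] at e1
    simp only [htr] at e1 e2 ⊢
    linarith
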